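/- Let (Q,·) be a RIP loop with self map σ whose A-holomorph (with σ'(α,x) = (α,σ(x))) is a σ'-generalized Bol loop. Then for all x ∈ Q and γ ∈ A(Q): R_{σ(x)}^{-1} R_{σ(xγ^{-1})} = R_{σ(x)^{-1}σ(xγ^{-1})}, i.e., y·σ(x)^{-1}·σ(xγ^{-1}) computed as (yR_{σ(x)}^{-1})·σ(xγ^{-1}) equals y·(σ(x)^{-1}·σ(xγ^{-1})) for all y ∈ Q. -/
import Mathlib


/-- A loop: a quasigroup with two-sided identity. -/
class MyLoop (L : Type*) extends Mul L, One L where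
  one_mul : ∀ a : L, 1 * a = a
  mul_one : ∀ a : L, a * 1 = a
  ldiv : L → L → L
  rdiv : L → L → L
  mul_ldiv : ∀ a b : L, a * ldiv a b = b
  ldiv_mul : ∀ a b : L, ldiv a (a * b) = b
  rdiv_mul : ∀ a b : L, rdiv a b * b = a
  mul_rdiv : ∀ a b : L, rdiv (a * b) b = a

namespace MyLoop

variable {L : Type*} [MyLoop L]

/-- right inverse: `x * rho x = 1` -/
def rho (x : L) : L := ldiv x 1

/-- left inverse: `lam x * x = 1` -/
def lam (x : L) : L := rdiv 1 x

/-- right translation `R_a : y ↦ y * a`, as a bijection -/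
def Rt (a : L) : Equiv.Perm L :=
  ⟨fun y => y * a, fun y => rdiv y a, fun y => mul_rdiv y a, fun y => rdiv_mul y a⟩

/-- left translation `L_a : y ↦ a * y`, as a bijection -/
def Lt (a : L) : Equiv.Perm L :=
  ⟨fun y => a * y, fun y => ldiv a y, fun y => ldiv_mul a y, fun y => mul_ldiv a y⟩

/-- σ-generalized (right) Bol loop identity -/
def GBol (σ : L → L) : Prop := ∀ x y z : L, ((x * y) * z) * σ y = x * ((y * z) * σ y)

/-- σ-generalized left Bol loop identity -/
def LBol (σ : L → L) : Prop := ∀ x y z : L, σ y * (z * (y * x)) = (σ y * (z * y)) * x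

/-- σ-M-loop identity -/
def MLoopP (σ : L → L) : Prop := ∀ x y z : L, (x * y) * (z * σ x) = (x * (y * z)) * σ x

/-- right inverse property -/
def RIP (L : Type*) [MyLoop L] : Prop := ∀ x y : L, (y * x) * rho x = y

/-- left inverse property -/
def LIP (L : Type*) [MyLoop L] : Prop := ∀ x y : L, lam x * (x * y) = y

/-- right nucleus -/
def Nrho (L : Type*) [MyLoop L] : Set L := {a | ∀ y z : L, (z * y) * a = z * (y * a)}

/-- middle nucleus -/
def Nmu (L : Type*) [MyLoop L] : Set L := {a | ∀ y z : L, (z * a) * y = z * (a * y)}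

/-- multiplication of the A-holomorph `H = A × L`, `(α,x)∘(β,y) = (αβ, xβ · y)` -/
def hmul (A : Subgroup (MulAut L)) (p q : ↥A × L) : ↥A × L :=
  (p.1 * q.1, (q.1 : MulAut L) p.2 * q.2)

/-- the right inverse of an element of the holomorph -/
def hrho (A : Subgroup (MulAut L)) (p : ↥A × L) : ↥A × L :=
  (p.1⁻¹, rho ((p.1⁻¹ : MulAut L) p.2))

/-- the holomorph is a σ'-generalized Bol loop, where `σ'(α,x) = (α, σ x)` -/
def HGBol (A : Subgroup (MulAut L)) (σ : L → L) : Prop :=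
  ∀ p q r : ↥A × L,
    hmul A (hmul A (hmul A p q) r) (q.1, σ q.2) =
      hmul A p (hmul A (hmul A q r) (q.1, σ q.2))

end MyLoop

open MyLoop

/-- if the A-holomorph of a RIP loop is a σ'-generalized Bol loop,
then `R_{σ(x)}⁻¹ R_{σ(xγ⁻¹)} = R_{σ(x)⁻¹·σ(xγ⁻¹)}` for all `x ∈ Q`, `γ ∈ A(Q)`. -/
theorem holomorph_gbol_translation {L : Type*} [MyLoop L] (σ : L → L)
    (A : Subgroup (MulAut L)) (hrip : RIP L) (h : HGBol A σ) :
    ∀ (x : L) (γ : ↥A), ∀ y : L,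
      (Rt (σ x)).symm y * σ ((γ⁻¹ : MulAut L) x) =
        y * (rho (σ x) * σ ((γ⁻¹ : MulAut L) x)) := by
  intro x γ y
  have key : ∀ (δ : ↥A) (a b c : L),
      ((δ : MulAut L) (a * b) * c) * σ b
        = (δ : MulAut L) a * (((δ : MulAut L) b * c) * σ b) := by
    intro δ a b c
    have := congrArg Prod.snd (h (1, a) (1, b) (δ, c))
    simpa [hmul, map_mul] using this
  -- rho (σ x) is a left inverse of σ x
  have hlam : lam (σ x) * (σ x) = 1 := rdiv_mul 1 (σ x)
  have hinv : rho (σ x) * σ x = 1 := by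
    have h2 : (lam (σ x) * σ x) * rho (σ x) = lam (σ x) := hrip (σ x) (lam (σ x))
    rw [hlam, MyLoop.one_mul] at h2
    rw [h2]; exact hlam
  set w := ldiv x (rho (σ x)) with hw
  have hxw : x * w = rho (σ x) := mul_ldiv x (rho (σ x))
  -- step 1: ((y*x)*w)*σ x = y
  have h1 : ((y * x) * w) * σ x = y := by
    have hk := key 1 y x w
    simp only [OneMemClass.coe_one, MulAut.one_apply] at hk
    rw [hk, hxw, hinv, MyLoop.mul_one]
  -- hence rdiv y (σ x) = (y*x)*w
  have hz : rdiv y (σ x) = (y * x) * w := by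
    have := mul_rdiv ((y * x) * w) (σ x)
    rwa [h1] at this
  -- step 2
  have h2 : ((y * x) * w) * σ ((γ⁻¹ : MulAut L) x)
      = y * ((x * w) * σ ((γ⁻¹ : MulAut L) x)) := by
    have hk := key γ ((γ⁻¹ : MulAut L) y) ((γ⁻¹ : MulAut L) x) w
    simp only [map_mul] at hk
    simpa using hk
  show rdiv y (σ x) * σ ((γ⁻¹ : MulAut L) x) = _
  rw [hz, h2, hxw]
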